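/- Let E₁ = (t,t), E₂ = E₁ + y t^ν(−1,1) with y > 0, and consider the cylinder C(w, l) with axis the segment [0, E₁], half-width w = y t^ν and length l = t^μ measured from E₁, with ν < μ ≤ 1. Then the minimal Euclidean distance d_m between the upper lateral boundary ∂C(w,l)₊ and the segment from 0 to E₂ satisfies d_m = (√2 − 1)·y t^ν + O(t^{ν+μ−1}). -/
import Mathlib
noncomputable def eudist (p q : ℝ × ℝ) : ℝ :=
  Real.sqrt ((p.1 - q.1) ^ 2 + (p.2 - q.2) ^ 2)

set_option maxHeartbeats 1000000 in
/-- With `E₁ = (t,t)`, `E₂ = E₁ + y t^ν(−1,1)` (`y > 0`), the cylinder `C(w,l)` of axis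
`[0,E₁]`, half-width `w = y t^ν`, length `l = t^μ` from `E₁` (`ν < μ ≤ 1`): the minimal
distance `d_m` between the upper lateral boundary `∂C(w,l)₊` and the segment `[0,E₂]`
satisfies `d_m = (√2 − 1) y t^ν + O(t^{ν+μ−1})`. -/
theorem stmt_13 (y ν μ : ℝ) (hy : 0 < y) (hνμ : ν < μ) (hμ : μ ≤ 1) :
    ∃ C t₀ : ℝ, 0 < C ∧ ∀ t ≥ t₀,
      let w : ℝ := y * t ^ ν
      let l : ℝ := t ^ μ
      let E₂ : ℝ × ℝ := (t - y * t ^ ν, t + y * t ^ ν)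
      let dm : ℝ := sInf {r : ℝ | ∃ lam ∈ Set.Icc (0 : ℝ) 1, ∃ s ∈ Set.Icc (0 : ℝ) 1,
        r = eudist (t - w / Real.sqrt 2 - lam * l / Real.sqrt 2,
                    t + w / Real.sqrt 2 - lam * l / Real.sqrt 2)
              (s * E₂.1, s * E₂.2)}
      |dm - (Real.sqrt 2 - 1) * y * t ^ ν| ≤ C * t ^ (ν + μ - 1) := by
  refine ⟨y ^ 3 + y, 1, by positivity, ?_⟩
  intro t ht
  intro w l E₂ dm
  simp only [w, l, E₂, dm]
  clear dm E₂ w l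
  have htpos : (0:ℝ) < t := lt_of_lt_of_le one_pos ht
  set r : ℝ := Real.sqrt 2 with hrdef
  have hr2 : r ^ 2 = 2 := Real.sq_sqrt (by norm_num)
  have hr0 : (0:ℝ) < r := by rw [hrdef]; positivity
  clear_value r
  have hr1 : 1 < r := by nlinarith
  have hrlt : r < 2 := by nlinarith
  have hhalf : ∀ x : ℝ, x / r = x * r / 2 := by
    intro x
    rw [div_eq_div_iff hr0.ne' (by norm_num : (2:ℝ) ≠ 0)]
    linear_combination (-x) * hr2
  set w : ℝ := y * t ^ ν with hw
  set l : ℝ := t ^ μ with hl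
  have hwpos : 0 < w := by rw [hw]; positivity
  have hlpos : 0 < l := by rw [hl]; positivity
  clear_value w l
  set S : Set ℝ := {x : ℝ | ∃ lam ∈ Set.Icc (0 : ℝ) 1, ∃ s ∈ Set.Icc (0 : ℝ) 1,
      x = eudist (t - w / r - lam * l / r, t + w / r - lam * l / r)
            (s * (t - w), s * (t + w))} with hS
  -- the witness element: lam = 0, s = 1 gives exactly (r-1)*w
  have hval : eudist (t - w / r - 0 * l / r, t + w / r - 0 * l / r)
      (1 * (t - w), 1 * (t + w)) = (r - 1) * w := by
    simp only [eudist]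
    rw [hhalf w, hhalf (0 * l)]
    rw [show (t - w * r / 2 - 0 * l * r / 2 - 1 * (t - w)) ^ 2
        + (t + w * r / 2 - 0 * l * r / 2 - 1 * (t + w)) ^ 2 = ((r - 1) * w) ^ 2 from by
      linear_combination (-(w ^ 2) / 2) * hr2]
    exact Real.sqrt_sq (by nlinarith)
  have hmem : (r - 1) * w ∈ S := by
    rw [hS]
    exact ⟨0, ⟨le_refl 0, zero_le_one⟩, 1, ⟨zero_le_one, le_refl 1⟩, hval.symm⟩
  have hbdd : BddBelow S := by
    refine ⟨0, fun x hx => ?_⟩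
    rw [hS] at hx
    obtain ⟨lam, _, s, _, rfl⟩ := hx
    exact Real.sqrt_nonneg _
  have hub : sInf S ≤ (r - 1) * w := csInf_le hbdd hmem
  -- lower bound for every element of S
  have hlball : ∀ x ∈ S, (r - 1) * w - ((r - 1) * w ^ 3 / t ^ 2 + w * l / t) ≤ x := by
    rw [hS]
    rintro x ⟨lam, ⟨hlam0, hlam1⟩, s, ⟨hs0, hs1⟩, rfl⟩
    set g : ℝ := (r - 1) * w - ((r - 1) * w ^ 3 / t ^ 2 + w * l / t) with hg
    clear_value g
    rcases le_or_gt g 0 with hgle | hgpos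
    · exact le_trans hgle (Real.sqrt_nonneg _)
    rw [hhalf w, hhalf (lam * l)]
    set S2 : ℝ := Real.sqrt (2 * t ^ 2 + 2 * w ^ 2) with hS2def
    have hS2sq : S2 ^ 2 = 2 * t ^ 2 + 2 * w ^ 2 := Real.sq_sqrt (by positivity)
    have hS2pos : 0 < S2 := by rw [hS2def]; positivity
    clear_value S2
    have hS2ge : r * t ≤ S2 := by nlinarith [sq_nonneg w, mul_pos hr0 htpos]
    have h2t : 2 * t ≤ S2 + r * t := by nlinarith
    have hr2t : r ^ 2 * t ^ 2 = 2 * t ^ 2 := by rw [hr2]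
    have hS2le : S2 * t ≤ r * t ^ 2 + w ^ 2 := by
      nlinarith [mul_nonneg (sub_nonneg.2 hS2ge) (sub_nonneg.2 h2t)]
    -- cross-product lower bound
    have hcross_lb : g * S2 ≤ w * (2 * t - r * t - r * lam * l) := by
      have hc1 : w * (2 * t - r * t - r * l) ≤ w * (2 * t - r * t - r * lam * l) := by
        have h1 : lam * l ≤ l := mul_le_of_le_one_left hlpos.le hlam1
        have h2 : (0:ℝ) ≤ w * r * (l - lam * l) :=
          mul_nonneg (mul_nonneg hwpos.le hr0.le) (by linarith)
        nlinarith [h2]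
      have hc2 : g * S2 ≤ g * ((r * t ^ 2 + w ^ 2) / t) := by
        apply mul_le_mul_of_nonneg_left _ hgpos.le
        rw [le_div_iff₀ htpos]
        exact hS2le
      have hc3 : g * ((r * t ^ 2 + w ^ 2) / t) ≤ w * (2 * t - r * t - r * l) := by
        rw [← sub_nonneg]
        have expand : w * (2 * t - r * t - r * l) - g * ((r * t ^ 2 + w ^ 2) / t)
            = w * t * (2 - r ^ 2)
              + ((r - 1) ^ 2 * w ^ 3 * t ^ 2 + (r - 1) * w ^ 5 + w ^ 3 * l * t) / t ^ 3 := by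
          rw [hg]; field_simp; ring
        rw [expand, hr2]
        have h1 : (0:ℝ) ≤ (r - 1) ^ 2 * w ^ 3 * t ^ 2 := by positivity
        have h2 : (0:ℝ) ≤ (r - 1) * w ^ 5 := by nlinarith [pow_pos hwpos 5]
        have h3 : (0:ℝ) ≤ w ^ 3 * l * t := by positivity
        have h4 : (0:ℝ) ≤ ((r - 1) ^ 2 * w ^ 3 * t ^ 2 + (r - 1) * w ^ 5 + w ^ 3 * l * t) / t ^ 3 := by
          apply div_nonneg (by linarith) (by positivity)
        linarith
      exact hc2.trans (hc3.trans hc1)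
    -- Lagrange identity
    have hid : ((t - w * r / 2 - lam * l * r / 2 - s * (t - w)) ^ 2
          + (t + w * r / 2 - lam * l * r / 2 - s * (t + w)) ^ 2) * (2 * t ^ 2 + 2 * w ^ 2)
        = (w * (2 * t - r * t - r * lam * l)) ^ 2
          + ((t - w * r / 2 - lam * l * r / 2 - s * (t - w)) * (t - w)
             + (t + w * r / 2 - lam * l * r / 2 - s * (t + w)) * (t + w)) ^ 2 := by ring
    have hsq : (g * S2) ^ 2 ≤ (w * (2 * t - r * t - r * lam * l)) ^ 2 :=
      pow_le_pow_left₀ (mul_nonneg hgpos.le hS2pos.le) hcross_lb 2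
    have e1 : (g * S2) ^ 2 = g ^ 2 * (2 * t ^ 2 + 2 * w ^ 2) := by rw [mul_pow, hS2sq]
    have hfin : g ^ 2 * (2 * t ^ 2 + 2 * w ^ 2)
        ≤ ((t - w * r / 2 - lam * l * r / 2 - s * (t - w)) ^ 2
          + (t + w * r / 2 - lam * l * r / 2 - s * (t + w)) ^ 2) * (2 * t ^ 2 + 2 * w ^ 2) :=
      calc g ^ 2 * (2 * t ^ 2 + 2 * w ^ 2) = (g * S2) ^ 2 := e1.symm
        _ ≤ (w * (2 * t - r * t - r * lam * l)) ^ 2 := hsq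
        _ ≤ _ := by
            rw [hid]
            linarith [sq_nonneg ((t - w * r / 2 - lam * l * r / 2 - s * (t - w)) * (t - w)
               + (t + w * r / 2 - lam * l * r / 2 - s * (t + w)) * (t + w))]
    have key : g ^ 2 ≤ (t - w * r / 2 - lam * l * r / 2 - s * (t - w)) ^ 2
          + (t + w * r / 2 - lam * l * r / 2 - s * (t + w)) ^ 2 :=
      le_of_mul_le_mul_right hfin (by positivity)
    calc g = Real.sqrt (g ^ 2) := (Real.sqrt_sq hgpos.le).symm
      _ ≤ Real.sqrt ((t - w * r / 2 - lam * l * r / 2 - s * (t - w)) ^ 2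
          + (t + w * r / 2 - lam * l * r / 2 - s * (t + w)) ^ 2) := Real.sqrt_le_sqrt key
      _ = eudist (t - w * r / 2 - lam * l * r / 2, t + w * r / 2 - lam * l * r / 2)
            (s * (t - w), s * (t + w)) := rfl
  have hlb : (r - 1) * w - ((r - 1) * w ^ 3 / t ^ 2 + w * l / t) ≤ sInf S :=
    le_csInf ⟨_, hmem⟩ hlball
  -- bound the error term by (y^3+y) * t^(ν+μ-1)
  have hE1 : w * l / t = y * t ^ (ν + μ - 1) := by
    rw [hw, hl, Real.rpow_sub htpos, Real.rpow_add htpos, Real.rpow_one]; ring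
  have hE2 : w ^ 3 / t ^ 2 ≤ y ^ 3 * t ^ (ν + μ - 1) := by
    have e : w ^ 3 = y ^ 3 * t ^ (3 * ν) := by
      rw [hw, mul_pow, ← Real.rpow_natCast (t ^ ν) 3, ← Real.rpow_mul htpos.le,
        show ν * ((3:ℕ):ℝ) = 3 * ν by push_cast; ring]
    have e3 : t ^ (3 * ν) ≤ t ^ (ν + μ + 1) :=
      Real.rpow_le_rpow_of_exponent_le ht (by linarith)
    have e4 : t ^ (ν + μ + 1) = t ^ (ν + μ - 1) * t ^ (2:ℕ) := by
      rw [← Real.rpow_natCast t 2, ← Real.rpow_add htpos]; congr 1; push_cast; ring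
    rw [div_le_iff₀ (by positivity : (0:ℝ) < t ^ 2), e]
    calc y ^ 3 * t ^ (3 * ν) ≤ y ^ 3 * t ^ (ν + μ + 1) := by
          exact mul_le_mul_of_nonneg_left e3 (by positivity)
      _ = y ^ 3 * t ^ (ν + μ - 1) * t ^ 2 := by rw [e4]; ring
  have herr : (r - 1) * w ^ 3 / t ^ 2 + w * l / t ≤ (y ^ 3 + y) * t ^ (ν + μ - 1) := by
    have h5 : (0:ℝ) ≤ w ^ 3 / t ^ 2 := by positivity
    have h6 : (r - 1) * (w ^ 3 / t ^ 2) ≤ 1 * (w ^ 3 / t ^ 2) :=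
      mul_le_mul_of_nonneg_right (by linarith) h5
    rw [hE1, show (r - 1) * w ^ 3 / t ^ 2 = (r - 1) * (w ^ 3 / t ^ 2) from by ring]
    linarith [h6, hE2]
  have htarget : (r - 1) * y * t ^ ν = (r - 1) * w := by rw [hw]; ring
  rw [htarget, abs_le]
  have hEpos : (0:ℝ) ≤ (y ^ 3 + y) * t ^ (ν + μ - 1) := by positivity
  exact ⟨by linarith, by linarith⟩
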